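/- Let L̂_rad: ℝ → ℝ be continuous and symmetric with: (a) a zero of order γ₀ ∈ (n₀, n₀+1] at the origin, meaning |L̂_rad(ω)| ≥ c₀ |ω|^{γ₀} on a neighborhood [-R₀, R₀] of 0 for some c₀ > 0; (b) L̂_rad(ω) ≠ 0 for ω ≠ 0; and (c) |L̂_rad(ω)| ≥ C₁ |ω|^{γ₁} for |ω| > R₁ with γ₁ > 1. Fix t₀ ∈ ℝ and let κ̂: ℝ → [0,1] be continuous with κ̂ = 1 on [-1/2, 1/2] and κ̂ = 0 outside [-1, 1]. Then the function ν̂(ω) = (e^{-iωt₀} - ∑_{n=0}^{n₀} ((-it₀)^n/n!) ω^n κ̂(ω)) / L̂_rad(ω), extended by continuity at 0, belongs to L¹(ℝ) ∩ L²(ℝ). -/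

import Mathlib

open MeasureTheory Finset

/-- The (Fourier-domain) Radon basis function
`ν̂(ω) = (e^{-iωt₀} - κ̂(ω) ∑_{n=0}^{n₀} ((-it₀)^n/n!) ω^n) / L̂_rad(ω)` belongs to
`L¹(ℝ) ∩ L²(ℝ)`, under the admissibility conditions on `L̂_rad`: a zero of order
`γ₀ ∈ (n₀, n₀+1]` at the origin, no other zeros, and ellipticity
`|L̂_rad(ω)| ≥ C₁|ω|^{γ₁}` with `γ₁ > 1` at infinity; `κ̂` is a continuous cutoff with
values in `[0,1]`, equal to `1` on `[-1/2,1/2]` and to `0` outside `[-1,1]`. -/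
theorem radon_basis_function_L1_L2
    (Lrad : ℝ → ℝ) (hLcont : Continuous Lrad) (hLsym : ∀ ω, Lrad (-ω) = Lrad ω)
    (n₀ : ℕ) (γ₀ : ℝ) (hγ₀ : (n₀ : ℝ) < γ₀ ∧ γ₀ ≤ (n₀ : ℝ) + 1)
    (R₀ c₀ : ℝ) (hR₀ : 0 < R₀) (hc₀ : 0 < c₀)
    (hzero : ∀ ω : ℝ, |ω| ≤ R₀ → c₀ * |ω| ^ γ₀ ≤ |Lrad ω|)
    (hnonvanish : ∀ ω : ℝ, ω ≠ 0 → Lrad ω ≠ 0)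
    (C₁ R₁ γ₁ : ℝ) (hC₁ : 0 < C₁) (hR₁ : 0 < R₁) (hγ₁ : 1 < γ₁)
    (hell : ∀ ω : ℝ, R₁ < |ω| → C₁ * |ω| ^ γ₁ ≤ |Lrad ω|)
    (κ : ℝ → ℝ) (hκcont : Continuous κ) (hκ01 : ∀ ω, 0 ≤ κ ω ∧ κ ω ≤ 1)
    (hκone : ∀ ω : ℝ, |ω| ≤ 1 / 2 → κ ω = 1)
    (hκzero : ∀ ω : ℝ, 1 ≤ |ω| → κ ω = 0)
    (t₀ : ℝ)
    (νhat : ℝ → ℂ)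
    (hνhat : ∀ ω : ℝ, νhat ω =
      (Complex.exp (-Complex.I * ω * t₀) -
        (κ ω : ℂ) * ∑ n ∈ Finset.range (n₀ + 1),
          ((-Complex.I * t₀) ^ n / n.factorial) * (ω : ℂ) ^ n) / (Lrad ω : ℂ)) :
    Integrable νhat ∧ MemLp νhat 2 volume := by
  -- numerator
  set N : ℝ → ℂ := fun ω => Complex.exp (-Complex.I * ω * t₀) -
      (κ ω : ℂ) * ∑ n ∈ Finset.range (n₀ + 1),
        ((-Complex.I * t₀) ^ n / n.factorial) * (ω : ℂ) ^ n with hN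
  have hγ₁0 : 0 < γ₁ := lt_trans one_pos hγ₁
  have hγ₀0 : 0 < γ₀ := lt_of_le_of_lt (Nat.cast_nonneg n₀) hγ₀.1
  have hNcont : Continuous N := by
    apply Continuous.sub
    · exact Complex.continuous_exp.comp (by fun_prop)
    · exact ((Complex.continuous_ofReal.comp hκcont).mul
        (continuous_finset_sum _ fun n _ => by fun_prop))
  have hνeq : νhat = fun ω => N ω / (Lrad ω : ℂ) := funext fun ω => hνhat ω
  have hmeas : AEStronglyMeasurable νhat volume := by
    rw [hνeq]
    refine Measurable.aestronglyMeasurable ?_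
    simp only [div_eq_mul_inv]
    exact hNcont.measurable.mul
      ((Complex.measurable_ofReal.comp hLcont.measurable).inv)
  -- parameters
  set δ : ℝ := min R₀ (min (1/2) (|t₀|+1)⁻¹) with hδdef
  have hδ0 : 0 < δ := by positivity
  have hδR₀ : δ ≤ R₀ := min_le_left _ _
  have hδhalf : δ ≤ 1/2 := le_trans (min_le_right _ _) (min_le_left _ _)
  have hδt : δ ≤ (|t₀|+1)⁻¹ := le_trans (min_le_right _ _) (min_le_right _ _)
  set R : ℝ := max R₁ 1 with hRdef
  have hR1 : 1 ≤ R := le_max_right _ _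
  have hRR₁ : R₁ ≤ R := le_max_left _ _
  have hδR : δ ≤ R := le_trans (le_trans hδhalf (by norm_num)) hR1
  -- compact bound on the annulus
  set S : Set ℝ := (fun ω : ℝ => |ω|) ⁻¹' Set.Icc δ R with hSdef
  have hScomp : IsCompact S := by
    refine IsCompact.of_isClosed_subset (isCompact_Icc (a := -R) (b := R))
      (isClosed_Icc.preimage continuous_abs) ?_
    intro x hx
    exact abs_le.mp hx.2
  have hScont : ContinuousOn νhat S := by
    rw [hνeq]
    refine ContinuousOn.div hNcont.continuousOn
      (Complex.continuous_ofReal.comp hLcont).continuousOn ?_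
    intro x hx
    have hx0 : x ≠ 0 := by
      intro h
      have h1 : δ ≤ |x| := hx.1
      rw [h, abs_zero] at h1
      linarith
    exact Complex.ofReal_ne_zero.mpr (hnonvanish x hx0)
  obtain ⟨M₁, hM₁⟩ := hScomp.exists_bound_of_continuousOn hScont
  -- constant for the Taylor bound near zero
  set K : ℝ := |t₀| ^ (n₀+1) * (n₀+2) with hKdef
  have hK0 : 0 ≤ K := by positivity
  set M₀ : ℝ := K / c₀ with hM₀def
  have hM₀0 : 0 ≤ M₀ := by positivity
  set M : ℝ := max M₀ (max M₁ 1) with hMdef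
  have hM0 : 0 < M := lt_of_lt_of_le one_pos (le_trans (le_max_right _ _) (le_max_right _ _))
  set A : ℝ := max (M * (1+R)^γ₁) (C₁⁻¹ * 2^γ₁) with hAdef
  have hA0 : 0 < A := lt_of_lt_of_le (by positivity) (le_max_right _ _)
  -- the main pointwise bound
  have hbound : ∀ ω : ℝ, ‖νhat ω‖ ≤ A * (1+‖ω‖) ^ (-γ₁) := by
    intro ω
    rw [Real.norm_eq_abs]
    rcases le_or_gt (|ω|) R with hωR | hωR
    · -- ‖νhat ω‖ ≤ M
      have hstep : ‖νhat ω‖ ≤ M := by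
        rcases le_or_gt δ (|ω|) with hωδ | hωδ
        · exact le_trans (hM₁ ω ⟨hωδ, hωR⟩)
            (le_trans (le_max_left _ _) (le_max_right _ _))
        · rcases eq_or_ne ω 0 with rfl | hω0
          · -- νhat 0 = 0
            have : νhat 0 = 0 := by
              rw [hνhat 0]
              have hsum : ∑ n ∈ Finset.range (n₀ + 1),
                  ((-Complex.I * t₀) ^ n / n.factorial) * ((0:ℝ) : ℂ) ^ n = 1 := by
                rw [Finset.sum_eq_single 0]
                · simp
                · intro b _ hb
                  simp [zero_pow hb]
                · intro h
                  exact absurd (Finset.mem_range.mpr (Nat.succ_pos n₀)) h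
              rw [hsum, hκone 0 (by norm_num)]
              simp
            rw [this]
            simpa using hM0.le
          · -- Taylor remainder bound
            have hωpos : 0 < |ω| := abs_pos.mpr hω0
            have hωδ' : |ω| ≤ δ := hωδ.le
            have hω1 : |ω| ≤ 1 := le_trans hωδ' (le_trans hδhalf (by norm_num))
            set x : ℂ := -Complex.I * ω * t₀ with hxdef
            have hxabs : ‖x‖ = |ω| * |t₀| := by
              simp [hxdef, abs_mul]
            have hx1 : ‖x‖ ≤ 1 := by
              rw [hxabs]
              have h1 : |ω| ≤ (|t₀|+1)⁻¹ := le_trans hωδ' hδt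
              have h2 : 0 < |t₀| + 1 := by positivity
              calc |ω| * |t₀| ≤ (|t₀|+1)⁻¹ * (|t₀|+1) := by
                    apply mul_le_mul h1 (by linarith) (abs_nonneg _) (by positivity)
                _ = 1 := inv_mul_cancel₀ h2.ne'
            -- numerator equals the exp remainder
            have hNeq : N ω = Complex.exp x - ∑ m ∈ Finset.range (n₀+1),
                x ^ m / m.factorial := by
              rw [hN]
              simp only
              rw [hκone ω (le_trans hωδ' hδhalf), Complex.ofReal_one, one_mul]
              congr 1
              refine Finset.sum_congr rfl fun n _ => ?_
              rw [div_mul_eq_mul_div, ← mul_pow]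
              congr 2
              rw [hxdef]
              ring
            have hrem := Complex.exp_bound hx1 (Nat.succ_pos n₀)
            have hc : ((n₀+1 : ℕ).succ : ℝ) * (((n₀+1 : ℕ).factorial : ℝ) * ((n₀+1 : ℕ) : ℝ))⁻¹
                ≤ (n₀ + 2 : ℝ) := by
              have h1 : (1:ℝ) ≤ ((n₀+1 : ℕ).factorial : ℝ) * ((n₀+1 : ℕ) : ℝ) := by
                have := Nat.one_le_iff_ne_zero.mpr (Nat.factorial_ne_zero (n₀+1))
                have h2 : (1:ℕ) ≤ (n₀+1) := Nat.succ_le_succ (Nat.zero_le _)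
                push_cast
                nlinarith [Nat.one_le_cast (α := ℝ).mpr this, Nat.one_le_cast (α := ℝ).mpr h2]
              have h3 : (((n₀+1 : ℕ).factorial : ℝ) * ((n₀+1 : ℕ) : ℝ))⁻¹ ≤ 1 := by
                rw [inv_le_one_iff₀]; right; exact h1
              calc ((n₀+1 : ℕ).succ : ℝ) * (((n₀+1 : ℕ).factorial : ℝ) * ((n₀+1 : ℕ) : ℝ))⁻¹
                  ≤ ((n₀+1 : ℕ).succ : ℝ) * 1 := by
                    apply mul_le_mul_of_nonneg_left h3 (by positivity)
                _ = (n₀ + 2 : ℝ) := by push_cast; ring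
            have hnum : ‖N ω‖ ≤ K * |ω| ^ γ₀ := by
              rw [hNeq]
              calc ‖Complex.exp x - ∑ m ∈ Finset.range (n₀+1), x ^ m / m.factorial‖
                  ≤ ‖x‖ ^ (n₀+1) * (((n₀+1 : ℕ).succ : ℝ) *
                    (((n₀+1 : ℕ).factorial : ℝ) * ((n₀+1 : ℕ) : ℝ))⁻¹) := by
                    convert hrem using 2 <;> push_cast <;> ring
                _ ≤ ‖x‖ ^ (n₀+1) * (n₀ + 2 : ℝ) := by
                    apply mul_le_mul_of_nonneg_left hc (by positivity)
                _ = (|ω| ^ (n₀+1) * |t₀| ^ (n₀+1)) * (n₀ + 2 : ℝ) := by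
                    rw [hxabs, mul_pow]
                _ ≤ (|ω| ^ (γ₀ : ℝ) * |t₀| ^ (n₀+1)) * (n₀ + 2 : ℝ) := by
                    have hle : |ω| ^ ((n₀+1 : ℕ) : ℝ) ≤ |ω| ^ γ₀ :=
                      Real.rpow_le_rpow_of_exponent_ge hωpos hω1 (by push_cast; linarith [hγ₀.2])
                    rw [← Real.rpow_natCast |ω| (n₀+1)]
                    apply mul_le_mul_of_nonneg_right _ (by positivity)
                    apply mul_le_mul_of_nonneg_right hle (by positivity)
                _ = K * |ω| ^ γ₀ := by rw [hKdef]; ring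
            have hLpos : 0 < |Lrad ω| := abs_pos.mpr (hnonvanish ω hω0)
            have hLlow : c₀ * |ω| ^ γ₀ ≤ |Lrad ω| := hzero ω (le_trans hωδ' hδR₀)
            have hν : ‖νhat ω‖ = ‖N ω‖ / |Lrad ω| := by
              rw [hνeq]
              simp only [norm_div, Complex.norm_real, Real.norm_eq_abs]
            rw [hν]
            rw [div_le_iff₀ hLpos]
            calc ‖N ω‖ ≤ K * |ω| ^ γ₀ := hnum
              _ = M₀ * (c₀ * |ω| ^ γ₀) := by rw [hM₀def]; field_simp
              _ ≤ M₀ * |Lrad ω| := mul_le_mul_of_nonneg_left hLlow hM₀0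
              _ ≤ M * |Lrad ω| := mul_le_mul_of_nonneg_right (le_max_left _ _) hLpos.le
      -- M ≤ A * (1+|ω|)^(-γ₁)
      refine le_trans hstep ?_
      have h1R : (0:ℝ) < 1 + R := by linarith
      have h1ω : (0:ℝ) < 1 + |ω| := by positivity
      have hmon : (1+R) ^ (-γ₁) ≤ (1+|ω|) ^ (-γ₁) :=
        Real.rpow_le_rpow_of_nonpos h1ω (by linarith) (by linarith)
      calc M = (M * (1+R)^γ₁) * (1+R)^(-γ₁) := by
              rw [mul_assoc, ← Real.rpow_add h1R, add_neg_cancel, Real.rpow_zero, mul_one]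
        _ ≤ (M * (1+R)^γ₁) * (1+|ω|)^(-γ₁) :=
              mul_le_mul_of_nonneg_left hmon (by positivity)
        _ ≤ A * (1+|ω|)^(-γ₁) :=
              mul_le_mul_of_nonneg_right (le_max_left _ _) (by positivity)
    · -- large |ω|
      have hω1 : 1 ≤ |ω| := le_trans hR1 hωR.le
      have hω0 : ω ≠ 0 := by
        intro h; rw [h] at hω1; simp at hω1; linarith
      have hκ0 : κ ω = 0 := hκzero ω hω1
      have hLpos : 0 < |Lrad ω| := abs_pos.mpr (hnonvanish ω hω0)
      have hLlow : C₁ * |ω| ^ γ₁ ≤ |Lrad ω| := hell ω (lt_of_le_of_lt hRR₁ hωR)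
      have hν : ‖νhat ω‖ = 1 / |Lrad ω| := by
        rw [hνeq]
        simp only [hN, norm_div, Complex.norm_real, Real.norm_eq_abs]
        congr 1
        rw [hκ0]
        simp [Complex.norm_exp]
      rw [hν]
      have hrp : (0:ℝ) < C₁ * |ω| ^ γ₁ := by positivity
      have h1 : 1 / |Lrad ω| ≤ 1 / (C₁ * |ω| ^ γ₁) :=
        one_div_le_one_div_of_le hrp hLlow
      refine le_trans h1 ?_
      have h2 : 1 / (C₁ * |ω| ^ γ₁) = C₁⁻¹ * |ω| ^ (-γ₁) := by
        rw [Real.rpow_neg (abs_nonneg _), one_div, mul_inv]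
      rw [h2]
      have h3 : (1+|ω|) ^ (-γ₁) ≥ (2*|ω|) ^ (-γ₁) :=
        Real.rpow_le_rpow_of_nonpos (by positivity) (by linarith) (by linarith)
      have h4 : (2*|ω|) ^ (-γ₁) = 2^(-γ₁) * |ω|^(-γ₁) :=
        Real.mul_rpow (by norm_num) (abs_nonneg _)
      calc C₁⁻¹ * |ω| ^ (-γ₁) = (C₁⁻¹ * 2^γ₁) * (2^(-γ₁) * |ω|^(-γ₁)) := by
            rw [← mul_assoc, mul_assoc C₁⁻¹, ← Real.rpow_add (by norm_num : (0:ℝ) < 2),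
              add_neg_cancel, Real.rpow_zero, mul_one]
        _ = (C₁⁻¹ * 2^γ₁) * (2*|ω|) ^ (-γ₁) := by rw [h4]
        _ ≤ A * (2*|ω|) ^ (-γ₁) :=
            mul_le_mul_of_nonneg_right (le_max_right _ _) (by positivity)
        _ ≤ A * (1+|ω|)^(-γ₁) := mul_le_mul_of_nonneg_left h3 hA0.le
  -- the dominating function is integrable and in L²
  have hfr : ((Module.finrank ℝ ℝ : ℕ) : ℝ) < γ₁ := by
    simp only [Module.finrank_self, Nat.cast_one]; exact hγ₁
  have hint_h : Integrable (fun ω : ℝ => A * (1+‖ω‖) ^ (-γ₁)) volume :=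
    (integrable_one_add_norm hfr).const_mul A
  constructor
  · exact hint_h.mono' hmeas (Filter.Eventually.of_forall hbound)
  · have hhcont : Continuous (fun ω : ℝ => A * (1+‖ω‖) ^ (-γ₁)) := by
      apply continuous_const.mul
      apply Continuous.rpow_const (continuous_const.add continuous_norm)
      intro x; left; show (1:ℝ) + ‖x‖ ≠ 0; positivity
    have hhmeas : AEStronglyMeasurable (fun ω : ℝ => A * (1+‖ω‖) ^ (-γ₁)) volume :=
      hhcont.aestronglyMeasurable
    have hfr2 : ((Module.finrank ℝ ℝ : ℕ) : ℝ) < 2*γ₁ := by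
      simp only [Module.finrank_self, Nat.cast_one]; linarith
    have hsq : Integrable (fun ω : ℝ => (A * (1+‖ω‖) ^ (-γ₁))^2) volume := by
      have heq : (fun ω : ℝ => (A * (1+‖ω‖) ^ (-γ₁))^2)
          = fun ω : ℝ => A^2 * (1+‖ω‖) ^ (-(2*γ₁)) := by
        funext ω
        have h0 : (0:ℝ) ≤ 1 + ‖ω‖ := by positivity
        rw [mul_pow, ← Real.rpow_natCast ((1+‖ω‖) ^ (-γ₁)) 2, ← Real.rpow_mul h0]
        congr 1
        push_cast
        ring
      rw [heq]
      exact (integrable_one_add_norm hfr2).const_mul (A^2)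
    have hmemh : MemLp (fun ω : ℝ => A * (1+‖ω‖) ^ (-γ₁)) 2 volume :=
      (memLp_two_iff_integrable_sq hhmeas).mpr hsq
    refine MemLp.of_le hmemh hmeas (Filter.Eventually.of_forall fun ω => ?_)
    exact le_trans (hbound ω) (Real.le_norm_self _)
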